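/- Let f : ℝ → ℝ be convex with conjugate f*, and suppose y₀ = f'(u₀) for some subgradient f'(u₀) ∈ ∂f(u₀). If y₁ is defined by y₁ = argmax_y { y·g - f*(y) - τ·U(y, y₀) }, where U(y, y₀) = f*(y) - f*(y₀) - (f*)'(y₀)·(y - y₀) is the Bregman divergence of f* with (f*)'(y₀) = u₀, then y₁ ∈ ∂f(u₁) where u₁ = (τ·u₀ + g)/(1 + τ). -/

import Mathlib

/-- `y` is a subgradient of `f` at `u`. -/
def IsSubgradientAt (f : ℝ → ℝ) (u y : ℝ) : Prop :=
  ∀ v : ℝ, f u + y * (v - u) ≤ f v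

lemma exists_subgradient (f : ℝ → ℝ) (hf : ConvexOn ℝ Set.univ f) (u : ℝ) :
    ∃ y, IsSubgradientAt f u y := by
  set S : Set ℝ := (fun w => (f u - f w) / (u - w)) '' Set.Iio u with hS
  have hne : S.Nonempty := ⟨_, ⟨u - 1, by simp, rfl⟩⟩
  have hbdd : BddAbove S := by
    refine ⟨(f (u + 1) - f u) / (u + 1 - u), ?_⟩
    rintro _ ⟨w, hw, rfl⟩
    exact hf.slope_mono_adjacent (Set.mem_univ w) (Set.mem_univ (u + 1)) hw (by linarith)
  refine ⟨sSup S, fun v => ?_⟩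
  rcases lt_trichotomy v u with h | h | h
  · have hmem : (f u - f v) / (u - v) ∈ S := ⟨v, h, rfl⟩
    have := le_csSup hbdd hmem
    have huv : 0 < u - v := by linarith
    rw [div_le_iff₀ huv] at this
    nlinarith
  · simp [h]
  · have hle : sSup S ≤ (f v - f u) / (v - u) := by
      apply csSup_le hne
      rintro _ ⟨w, hw, rfl⟩
      exact hf.slope_mono_adjacent (Set.mem_univ w) (Set.mem_univ v) hw h
    have hvu : 0 < v - u := by linarith
    rw [le_div_iff₀ hvu] at hle
    linarith

lemma fenchel_eq (f fstar : ℝ → ℝ) (u y : ℝ)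
    (hconj : ∀ y : ℝ, IsLUB {z : ℝ | ∃ u : ℝ, z = u * y - f u} (fstar y))
    (hsub : IsSubgradientAt f u y) : fstar y = u * y - f u := by
  have h1 : fstar y ≤ u * y - f u := by
    apply (hconj y).2
    rintro _ ⟨v, rfl⟩
    have := hsub v
    nlinarith [hsub v]
  have h2 : u * y - f u ≤ fstar y := (hconj y).1 ⟨u, rfl⟩
  linarith

theorem stmt0 (f fstar : ℝ → ℝ) (τ g u₀ y₀ y₁ : ℝ)
    (hτ : 0 < τ)
    (hf : ConvexOn ℝ Set.univ f)
    (hconj : ∀ y : ℝ, IsLUB {z : ℝ | ∃ u : ℝ, z = u * y - f u} (fstar y))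
    (hy₀ : IsSubgradientAt f u₀ y₀)
    (hu₀ : IsSubgradientAt fstar y₀ u₀)
    (hmax : ∀ y : ℝ,
      y * g - fstar y - τ * (fstar y - fstar y₀ - u₀ * (y - y₀)) ≤
      y₁ * g - fstar y₁ - τ * (fstar y₁ - fstar y₀ - u₀ * (y₁ - y₀))) :
    IsSubgradientAt f ((τ * u₀ + g) / (1 + τ)) y₁ := by
  set u₁ : ℝ := (τ * u₀ + g) / (1 + τ) with hu₁
  have hτ1 : (0:ℝ) < 1 + τ := by linarith
  have hu₁' : u₁ * (1 + τ) = τ * u₀ + g := by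
    rw [hu₁]; field_simp
  -- u₁ is a subgradient of fstar at y₁
  have hsub1 : IsSubgradientAt fstar y₁ u₁ := by
    intro y
    have h := hmax y
    have h3 : u₁ * (y - y₁) ≤ fstar y - fstar y₁ := by
      rw [← mul_le_mul_iff_of_pos_right hτ1]
      have h4 : u₁ * (1 + τ) * (y - y₁) = (τ * u₀ + g) * (y - y₁) := by rw [hu₁']
      nlinarith [h4]
    linarith
  -- pick a subgradient y' of f at u₁
  obtain ⟨y', hy'⟩ := exists_subgradient f hf u₁
  have heq : fstar y' = u₁ * y' - f u₁ := fenchel_eq f fstar u₁ y' hconj hy'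
  have hkey : f u₁ ≤ u₁ * y₁ - fstar y₁ := by
    have := hsub1 y'
    nlinarith [hsub1 y']
  intro v
  have hub : v * y₁ - f v ≤ fstar y₁ := (hconj y₁).1 ⟨v, rfl⟩
  nlinarith
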